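/- arXiv:1305.4607 — 2 statements merged into one kernel-verified Lean document; each statement's English description precedes it below -/
import Mathlib

section
/- Let I be a small directed (cofiltered) category. Then there exists a small cofinite directed partially ordered set A of infinite height and a cofinal functor p: A → I. -/
open CategoryTheory
open scoped Classical

attribute [-instance] CategoryTheory.uniformProd CategoryTheory.prod CategoryTheory.prod'

namespace ProPaper

/-- A cofinite directed partially ordered set: a poset which is directed
(any two elements admit an upper bound, and it is nonempty) and cofinite
(every element has finitely many elements below it). -/
structure CofDirPoset where
  carrier : Type
  [po : PartialOrder carrier]
  [dir : IsDirected carrier (· ≤ ·)]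
  [ne : Nonempty carrier]
  cofinite : ∀ t : carrier, {s : carrier | s ≤ t}.Finite

attribute [instance] CofDirPoset.po CofDirPoset.dir CofDirPoset.ne

section Construction

variable (I : Type) [SmallCategory I] [IsCofiltered I]

/-- The type of morphisms of `I`, together with their endpoints. -/
abbrev Mor : Type := Σ i : I, Σ j : I, i ⟶ j

/-- The underlying type of our cofinite directed poset: pairs of a finite set of
morphisms of `I` and a natural number, ordered componentwise. -/
abbrev AA : Type := Finset (Mor I) × ℕ

lemma down_finite (a : AA I) : {b : AA I | b ≤ a}.Finite := by
  classical
  apply Set.Finite.subset ((a.1.powerset ×ˢ Finset.range (a.2 + 1)).finite_toSet)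
  rintro ⟨S, n⟩ h
  simp only [Set.mem_setOf_eq, Prod.le_def] at h
  simp only [Finset.coe_product, Set.mem_prod, Finset.mem_coe, Finset.mem_powerset,
    Finset.mem_range, Nat.lt_succ_iff]
  exact ⟨h.1, h.2⟩

/-- The rank of an element, strictly monotone along `<`. -/
def rank (a : AA I) : ℕ := a.1.card + a.2

lemma rank_lt_of_lt {a b : AA I} (h : a < b) : rank I a < rank I b := by
  rcases Prod.lt_iff.1 h with ⟨h1, h2⟩ | ⟨h1, h2⟩
  · have := Finset.card_lt_card h1
    unfold rank; omega
  · have := Finset.card_le_card h1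
    unfold rank; omega

/-- The data chosen at each stage of the recursion: an object, a finite set of
objects of `I`, and a "leg" morphism to each of them. -/
def Data : Type := Σ' (X : I) (O : Set I) (_ : O.Finite), ∀ Y ∈ O, (X ⟶ Y)

/-- The coherence properties of the stage-`a` data relative to the data at earlier
stages. -/
def Good (a : AA I) (prev : ∀ b : AA I, b < a → Data I) (d : Data I) : Prop :=
  (∀ b (h : b < a), (prev b h).1 ∈ d.2.1 ∧ (prev b h).2.1 ⊆ d.2.1) ∧
  (∀ s : Mor I, s ∈ a.1 → s.1 ∈ d.2.1 ∧ s.2.1 ∈ d.2.1) ∧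
  (∀ (s : Mor I) (_ : s ∈ a.1) (h1 : s.1 ∈ d.2.1) (h2 : s.2.1 ∈ d.2.1),
      d.2.2.2 s.1 h1 ≫ s.2.2 = d.2.2.2 s.2.1 h2) ∧
  (∀ b (h : b < a) (Y : I) (hY : Y ∈ (prev b h).2.1)
      (hb : (prev b h).1 ∈ d.2.1) (hY' : Y ∈ d.2.1),
      d.2.2.2 (prev b h).1 hb ≫ (prev b h).2.2.2 Y hY = d.2.2.2 Y hY')

/-- A cone over a finite set of objects and a finite set of triangles, in a
cofiltered category; `Set`-based version of `IsCofiltered.inf_exists`. -/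
lemma cone_exists (O : Set I) (hO : O.Finite) (H : Set (Mor I)) (hH : H.Finite)
    (hsub : ∀ s ∈ H, s.1 ∈ O ∧ s.2.1 ∈ O) :
    ∃ (Z : I) (T : ∀ Y ∈ O, Z ⟶ Y),
      ∀ (s : Mor I) (_ : s ∈ H) (h1 : s.1 ∈ O) (h2 : s.2.1 ∈ O),
        T s.1 h1 ≫ s.2.2 = T s.2.1 h2 := by
  classical
  have memO : ∀ {Y : I}, Y ∈ O ↔ Y ∈ hO.toFinset := by simp
  set H' : Finset (Σ' (X Y : I) (_ : X ∈ hO.toFinset) (_ : Y ∈ hO.toFinset), X ⟶ Y) :=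
    hH.toFinset.attach.image (fun s =>
      ⟨s.1.1, s.1.2.1, memO.1 (hsub s.1 (hH.mem_toFinset.1 s.2)).1,
        memO.1 (hsub s.1 (hH.mem_toFinset.1 s.2)).2, s.1.2.2⟩) with hH'
  obtain ⟨Z, T, hT⟩ := IsCofiltered.inf_exists hO.toFinset H'
  refine ⟨Z, fun Y hY => T (memO.1 hY), ?_⟩
  intro s hs h1 h2
  refine hT (memO.1 h1) (memO.1 h2) ?_
  rw [hH']
  refine Finset.mem_image.2 ⟨⟨s, hH.mem_toFinset.2 hs⟩, Finset.mem_attach _ _, rfl⟩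

lemma exists_step (a : AA I) (prev : ∀ b : AA I, b < a → Data I) :
    ∃ d : Data I, Good I a prev d := by
  classical
  have finPred : Finite {b : AA I // b < a} :=
    Set.Finite.to_subtype ((down_finite I a).subset (by intro b hb; simp only [Set.mem_setOf_eq] at *; exact le_of_lt hb))
  have finO : ∀ b : {b : AA I // b < a}, Finite {Y : I // Y ∈ (prev b.1 b.2).2.1} :=
    fun b => ((prev b.1 b.2).2.2.1).to_subtype
  set O : Set I :=
    (⋃ b : {b : AA I // b < a}, ({(prev b.1 b.2).1} ∪ (prev b.1 b.2).2.1)) ∪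
      (⋃ s ∈ (a.1 : Set (Mor I)), {s.1, s.2.1}) with hOdef
  have hO : O.Finite := by
    apply Set.Finite.union
    · exact Set.finite_iUnion fun b => (Set.finite_singleton _).union (prev b.1 b.2).2.2.1
    · exact (a.1.finite_toSet).biUnion fun s _ => (Set.finite_singleton _).insert _
  have memX : ∀ (b : AA I) (h : b < a), (prev b h).1 ∈ O := by
    intro b h
    refine Set.mem_union_left _ (Set.mem_iUnion.2 ⟨⟨b, h⟩, Set.mem_union_left _ rfl⟩)
  have memOb : ∀ (b : AA I) (h : b < a), (prev b h).2.1 ⊆ O := by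
    intro b h Y hY
    exact Set.mem_union_left _ (Set.mem_iUnion.2 ⟨⟨b, h⟩, Set.mem_union_right _ hY⟩)
  have memS : ∀ s : Mor I, s ∈ a.1 → s.1 ∈ O ∧ s.2.1 ∈ O := by
    intro s hs
    constructor
    · exact Set.mem_union_right _ (Set.mem_biUnion hs (by simp))
    · exact Set.mem_union_right _ (Set.mem_biUnion hs (by simp))
  set H : Set (Mor I) :=
    (Set.range (fun p : Σ b : {b : AA I // b < a}, {Y : I // Y ∈ (prev b.1 b.2).2.1} =>
      (⟨(prev p.1.1 p.1.2).1, p.2.1, (prev p.1.1 p.1.2).2.2.2 p.2.1 p.2.2⟩ : Mor I))) ∪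
      (a.1 : Set (Mor I)) with hHdef
  have hH : H.Finite := (Set.finite_range _).union a.1.finite_toSet
  have hsub : ∀ s ∈ H, s.1 ∈ O ∧ s.2.1 ∈ O := by
    rintro s (⟨p, rfl⟩ | hs)
    · exact ⟨memX p.1.1 p.1.2, memOb p.1.1 p.1.2 p.2.2⟩
    · exact memS s hs
  obtain ⟨Z, T, hT⟩ := cone_exists I O hO H hH hsub
  refine ⟨⟨Z, O, hO, T⟩, ?_, ?_, ?_, ?_⟩
  · exact fun b h => ⟨memX b h, memOb b h⟩
  · exact memS
  · intro s hs h1 h2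
    exact hT s (Set.mem_union_right _ hs) h1 h2
  · intro b h Y hY hb hY'
    exact hT _ (Set.mem_union_left _ ⟨⟨⟨b, h⟩, ⟨Y, hY⟩⟩, rfl⟩) hb hY'

/-- The recursively chosen coherent system of cones. -/
noncomputable def F : AA I → Data I := fun a =>
  Classical.choose (exists_step I a (fun b hb => F b))
termination_by a => rank I a
decreasing_by all_goals exact rank_lt_of_lt I (by assumption)

lemma F_spec (a : AA I) : Good I a (fun b _ => F I b) (F I a) := by
  have h := Classical.choose_spec (exists_step I a (fun b _ => F I b))
  rw [F]
  exact h

/-- The object of `I` attached to a stage. -/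
noncomputable def ob (a : AA I) : I := (F I a).1

/-- The set of objects the stage-`a` cone maps to. -/
noncomputable def OO (a : AA I) : Set I := (F I a).2.1

/-- The legs of the stage-`a` cone. -/
noncomputable def leg (a : AA I) (Y : I) (h : Y ∈ OO I a) : ob I a ⟶ Y :=
  (F I a).2.2.2 Y h

lemma mem_ob {a b : AA I} (h : b < a) : ob I b ∈ OO I a := ((F_spec I a).1 b h).1

lemma OO_sub {a b : AA I} (h : b < a) : OO I b ⊆ OO I a := ((F_spec I a).1 b h).2

lemma mem_src {a : AA I} {s : Mor I} (hs : s ∈ a.1) : s.1 ∈ OO I a :=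
  ((F_spec I a).2.1 s hs).1

lemma mem_tgt {a : AA I} {s : Mor I} (hs : s ∈ a.1) : s.2.1 ∈ OO I a :=
  ((F_spec I a).2.1 s hs).2

lemma leg_tri {a : AA I} {s : Mor I} (hs : s ∈ a.1) (h1 : s.1 ∈ OO I a)
    (h2 : s.2.1 ∈ OO I a) : leg I a s.1 h1 ≫ s.2.2 = leg I a s.2.1 h2 :=
  (F_spec I a).2.2.1 s hs h1 h2

lemma leg_comp {a b : AA I} (h : b < a) {Y : I} (hY : Y ∈ OO I b)
    (hb : ob I b ∈ OO I a) (hY' : Y ∈ OO I a) :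
    leg I a (ob I b) hb ≫ leg I b Y hY = leg I a Y hY' :=
  (F_spec I a).2.2.2 b h Y hY hb hY'

/-- The transition morphisms of the functor. -/
noncomputable def δ (a b : AA I) (h : b ≤ a) : ob I a ⟶ ob I b :=
  if e : b = a then eqToHom (by rw [e]) else leg I a (ob I b) (mem_ob I (lt_of_le_of_ne h e))

lemma δ_self (a : AA I) (h : a ≤ a) : δ I a a h = 𝟙 _ := by simp [δ]

lemma δ_comp {a b c : AA I} (hba : b ≤ a) (hcb : c ≤ b) :
    δ I a b hba ≫ δ I b c hcb = δ I a c (hcb.trans hba) := by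
  by_cases e1 : b = a
  · subst e1; rw [δ_self]; simp
  · by_cases e2 : c = b
    · subst e2; rw [δ_self]; simp
    · have hb : b < a := lt_of_le_of_ne hba e1
      have hc : c < b := lt_of_le_of_ne hcb e2
      have e3 : ¬ c = a := by rintro rfl; exact absurd (hc.trans hb) (lt_irrefl c)
      simp only [δ, dif_neg e1, dif_neg e2, dif_neg e3]
      exact leg_comp I hb (mem_ob I hc) _ _

/-- The cofinal (initial) functor. -/
noncomputable def P : (AA I)ᵒᵖ ⥤ I where
  obj a := ob I a.unop
  map {a b} f := δ I a.unop b.unop (leOfHom f.unop)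
  map_id a := δ_self I a.unop (le_refl _)
  map_comp {a b c} f g := (δ_comp I (leOfHom f.unop) (leOfHom g.unop)).symm

lemma P_initial : (P I).Initial := by
  constructor
  intro i
  classical
  set a0 : AA I := (({⟨i, i, 𝟙 i⟩} : Finset (Mor I)), 0) with ha0
  have hm0 : (⟨i, i, 𝟙 i⟩ : Mor I) ∈ a0.1 := Finset.mem_singleton_self _
  have hne : Nonempty (CostructuredArrow (P I) i) :=
    ⟨CostructuredArrow.mk (Y := Opposite.op a0)
      (show (P I).obj (Opposite.op a0) ⟶ i from leg I a0 i (mem_tgt I hm0))⟩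
  refine zigzag_isConnected ?_
  intro u v
  set a : AA I := u.left.unop with ha
  set a' : AA I := v.left.unop with ha'
  set m : Mor I := ⟨ob I a, i, u.hom⟩ with hm
  set m' : Mor I := ⟨ob I a', i, v.hom⟩ with hm'
  set c : AA I := (a.1 ∪ a'.1 ∪ {m, m'}, max a.2 a'.2 + 1) with hc
  have hac : a < c := by
    refine Prod.lt_iff.2 (Or.inr ⟨?_, by simp [hc]⟩)
    intro x hx
    simp only [hc, Finset.mem_union]
    exact Or.inl (Or.inl hx)
  have hac' : a' < c := by
    refine Prod.lt_iff.2 (Or.inr ⟨?_, by simp [hc]⟩)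
    intro x hx
    simp only [hc, Finset.mem_union]
    exact Or.inl (Or.inr hx)
  have hmc : m ∈ c.1 := by simp [hc]
  have hmc' : m' ∈ c.1 := by simp [hc]
  set ψ : ob I c ⟶ i := leg I c i (mem_tgt I hmc) with hψ
  set w : CostructuredArrow (P I) i := CostructuredArrow.mk (Y := Opposite.op c) ψ with hw
  have f1 : w ⟶ u := by
    refine CostructuredArrow.homMk (homOfLE hac.le).op ?_
    show δ I c a hac.le ≫ u.hom = ψ
    have : δ I c a hac.le = leg I c (ob I a) (mem_ob I hac) := by
      rw [δ, dif_neg (ne_of_lt hac)]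
    rw [this]
    exact leg_tri I hmc (mem_ob I hac) (mem_tgt I hmc)
  have f2 : w ⟶ v := by
    refine CostructuredArrow.homMk (homOfLE hac'.le).op ?_
    show δ I c a' hac'.le ≫ v.hom = ψ
    have : δ I c a' hac'.le = leg I c (ob I a') (mem_ob I hac') := by
      rw [δ, dif_neg (ne_of_lt hac')]
    rw [this]
    exact leg_tri I hmc' (mem_ob I hac') (mem_tgt I hmc')
  exact Relation.ReflTransGen.tail (Relation.ReflTransGen.single (Or.inr ⟨f1⟩)) (Or.inl ⟨f2⟩)

end Construction

/-- Proposition 3.9 of the paper: for every small directed (cofiltered) category `I` there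
exists a small cofinite directed poset `A` of infinite height and a cofinal functor `A → I`.
Here the poset `A`, with the paper's convention of a unique morphism `u → v` iff `u ≥ v`,
corresponds to the category `Aᵒᵖ` with Mathlib's order-category convention, and a cofinal
functor (all over categories nonempty and connected) is Mathlib's `Functor.Initial`. -/
theorem exists_cofinite_directed_initial (I : Type) [SmallCategory I] [IsCofiltered I] :
    ∃ A : CofDirPoset, (∀ a : A.carrier, ∃ b : A.carrier, a < b) ∧
      ∃ p : A.carrierᵒᵖ ⥤ I, p.Initial := by
  classical
  have dirInst : IsDirected (AA I) (· ≤ ·) :=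
    ⟨fun a b => ⟨(a.1 ∪ b.1, max a.2 b.2),
      ⟨Finset.subset_union_left, le_max_left _ _⟩,
      ⟨Finset.subset_union_right, le_max_right _ _⟩⟩⟩
  have neInst : Nonempty (AA I) := ⟨(∅, 0)⟩
  refine ⟨{ carrier := AA I, po := inferInstance, dir := dirInst, ne := neInst,
            cofinite := down_finite I }, ?_, ⟨P I, P_initial I⟩⟩
  intro a
  exact ⟨(a.1, a.2 + 1), Prod.lt_iff.2 (Or.inr ⟨le_refl _, Nat.lt_succ_self _⟩)⟩

end ProPaper
end

section
/- Let D be a category and A, B classes of morphisms in D that are invariant under isomorphisms in the arrow category. If there exists a weak functorial factorization in D into a morphism in A followed by a morphism in B, then there exists a functorial factorization in D into a morphism in A followed by a morphism in B. -/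
open CategoryTheory CategoryTheory.Limits Opposite

universe v u

namespace ProPaper

section FuncFact

variable (D : Type*) [Category D]

/-- The monotone inclusion `Δ¹ ≅ Δ^{0,2} ↪ Δ²`, with `Δⁿ` modeled as `Fin (n+1)`. -/
def d02 : Fin 2 ⥤ Fin 3 :=
  Monotone.functor (f := fun i => (⟨2 * i.1, by omega⟩ : Fin 3))
    (fun a b h => by
      simp only [Fin.le_def] at h ⊢
      omega)

/-- The composition functor `D^{Δ²} ⥤ D^{Δ¹}`, i.e. restriction along `Δ¹ ↪ Δ²`. -/
def compFunctor : (Fin 3 ⥤ D) ⥤ (Fin 2 ⥤ D) :=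
  (Functor.whiskeringLeft (Fin 2) (Fin 3) D).obj d02

/-- The morphism `0 ⟶ 1` of `Δ²`. -/
def hom01 : (0 : Fin 3) ⟶ 1 := homOfLE (by decide)

/-- The morphism `1 ⟶ 2` of `Δ²`. -/
def hom12 : (1 : Fin 3) ⟶ 2 := homOfLE (by decide)

/-- `Mor(D) =^{func} B ∘ A`: there is a functorial factorization in `D` (a section of the
composition functor `D^{Δ²} ⥤ D^{Δ¹}`) into a morphism in `A` followed by a morphism in `B`. -/
def FuncFact (A B : MorphismProperty D) : Prop :=
  ∃ S : (Fin 2 ⥤ D) ⥤ (Fin 3 ⥤ D), S ⋙ compFunctor D = 𝟭 (Fin 2 ⥤ D) ∧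
    ∀ f : Fin 2 ⥤ D, A ((S.obj f).map hom01) ∧ B ((S.obj f).map hom12)

end FuncFact


/-- Corollary 5.7 of the paper: if `A` and `B` are classes of morphisms invariant under
isomorphism in the arrow category, and there exists a weak functorial factorization in `D`
into a morphism in `A` followed by a morphism in `B`, then there exists a (genuine)
functorial factorization in `D` into a morphism in `A` followed by a morphism in `B`. -/
theorem funcFact_of_weak_funcFact
    (D : Type*) [Category D] (A B : MorphismProperty D)
    (hA : ∀ ⦃X Y X' Y' : D⦄ (f : X ⟶ Y) (g : X' ⟶ Y'),
      (Arrow.mk f ≅ Arrow.mk g) → A f → A g)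
    (hB : ∀ ⦃X Y X' Y' : D⦄ (f : X ⟶ Y) (g : X' ⟶ Y'),
      (Arrow.mk f ≅ Arrow.mk g) → B f → B g)
    (S : (Fin 2 ⥤ D) ⥤ (Fin 3 ⥤ D))
    (hS : Nonempty (S ⋙ compFunctor D ≅ 𝟭 (Fin 2 ⥤ D)))
    (hAB : ∀ f : Fin 2 ⥤ D, A ((S.obj f).map hom01) ∧ B ((S.obj f).map hom12)) :
    FuncFact D A B := by
  obtain ⟨φ⟩ := hS
  -- the corrected section
  let S' : (Fin 2 ⥤ D) ⥤ (Fin 3 ⥤ D) :=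
  { obj := fun f => ComposableArrows.mk₂
      ((φ.inv.app f).app 0 ≫ (S.obj f).map hom01)
      ((S.obj f).map hom12 ≫ (φ.hom.app f).app 1)
    map := fun {f g} η => ComposableArrows.homMk₂ (η.app 0) ((S.map η).app 1) (η.app 1)
      (by
        have n1 := (S.map η).naturality hom01
        have n2 := congr_fun (congr_arg NatTrans.app (φ.inv.naturality η)) (0 : Fin 2)
        dsimp [compFunctor] at n1 n2
        have n2' : η.app 0 ≫ (φ.inv.app g).app 0
            = (φ.inv.app f).app 0 ≫ (S.map η).app 0 := n2
        show ((φ.inv.app f).app 0 ≫ (S.obj f).map hom01) ≫ (S.map η).app 1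
            = η.app 0 ≫ ((φ.inv.app g).app 0 ≫ (S.obj g).map hom01)
        erw [Category.assoc, n1, ← Category.assoc, ← n2', Category.assoc]
        rfl)
      (by
        have n1 := (S.map η).naturality hom12
        have n2 := congr_fun (congr_arg NatTrans.app (φ.hom.naturality η)) (1 : Fin 2)
        dsimp [compFunctor] at n1 n2
        have n2' : (S.map η).app 2 ≫ (φ.hom.app g).app 1
            = (φ.hom.app f).app 1 ≫ η.app 1 := n2
        show ((S.obj f).map hom12 ≫ (φ.hom.app f).app 1) ≫ η.app 1
            = (S.map η).app 1 ≫ ((S.obj g).map hom12 ≫ (φ.hom.app g).app 1)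
        erw [Category.assoc, ← n2', ← Category.assoc, n1, Category.assoc])
    map_id := fun f => by
      apply ComposableArrows.hom_ext₂ <;> first | rfl | simp
      exact ComposableArrows.homMk₂_app_one _ _ _ _ _
    map_comp := fun {f g h} η θ => by
      apply ComposableArrows.hom_ext₂ <;> first | rfl | simp
      exact ComposableArrows.homMk₂_app_one _ _ _ _ _ }
  have hobj : ∀ f : Fin 2 ⥤ D, (S' ⋙ compFunctor D).obj f = (𝟭 (Fin 2 ⥤ D)).obj f := by
    intro f
    have hobj' : ∀ i : Fin 2, ((S' ⋙ compFunctor D).obj f).obj i = f.obj i := by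
      intro i; fin_cases i <;> rfl
    refine CategoryTheory.Functor.ext hobj' (fun i j ψ => ?_)
    have hij : i ≤ j := leOfHom ψ
    fin_cases i <;> fin_cases j
    · have : ψ = 𝟙 (0 : Fin 2) := Subsingleton.elim _ _
      subst this; simp
    · -- the main case 0 ⟶ 1
      rw [conj_eqToHom_iff_heq']
      apply heq_of_eq
      have hd : (d02).map ψ = hom01 ≫ hom12 := Subsingleton.elim _ _
      have key : ((compFunctor D).obj (S.obj f)).map ψ ≫ (φ.hom.app f).app 1
          = (φ.hom.app f).app 0 ≫ f.map ψ := (φ.hom.app f).naturality ψ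
      have inv_hom : (φ.inv.app f).app 0 ≫ (φ.hom.app f).app 0 = 𝟙 (f.obj 0) := by
        have h2 := congr_fun (congr_arg NatTrans.app (φ.inv_hom_id_app f)) (0 : Fin 2)
        simp only [NatTrans.comp_app, NatTrans.id_app] at h2
        exact h2
      have lhs : ((S' ⋙ compFunctor D).obj f).map ψ
          = ((φ.inv.app f).app 0 ≫ (S.obj f).map hom01)
            ≫ ((S.obj f).map hom12 ≫ (φ.hom.app f).app 1) := by
        show (S'.obj f).map ((d02).map ψ) = _
        erw [hd, Functor.map_comp]
        rfl
      have e3 : ((compFunctor D).obj (S.obj f)).map ψ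
          = (S.obj f).map hom01 ≫ (S.obj f).map hom12 := by
        show (S.obj f).map ((d02).map ψ) = _
        erw [hd, Functor.map_comp]
        rfl
      rw [e3] at key
      rw [lhs]
      simp only [Category.assoc] at key ⊢
      exact (Category.assoc _ _ _).trans ((congrArg (_ ≫ ·) ((Category.assoc _ _ _).symm.trans key)).trans
        ((Category.assoc _ _ _).symm.trans ((congrArg (· ≫ f.map ψ) inv_hom).trans (Category.id_comp _))))
    · exact absurd hij (by decide)
    · have : ψ = 𝟙 (1 : Fin 2) := Subsingleton.elim _ _
      subst this; simp
  refine ⟨S', CategoryTheory.Functor.ext hobj (fun f g η => ?_), ?_⟩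
  · apply NatTrans.ext
    funext i
    rw [NatTrans.comp_app, NatTrans.comp_app, eqToHom_app, eqToHom_app,
      conj_eqToHom_iff_heq']
    fin_cases i <;> exact HEq.rfl
  · -- the factorizations lie in A and B
    intro f
    constructor
    · have e1 : (S'.obj f).map hom01 = (φ.inv.app f).app 0 ≫ (S.obj f).map hom01 := rfl
      rw [e1]
      refine hA _ _ ?_ (hAB f).1
      refine Arrow.isoMk (Iso.app (φ.app f) 0) (Iso.refl _) ?_
      have hi : (φ.hom.app f).app 0 ≫ (φ.inv.app f).app 0 = 𝟙 ((S.obj f).obj 0) := by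
        have h2 := congr_fun (congr_arg NatTrans.app (φ.hom_inv_id_app f)) (0 : Fin 2)
        simp only [NatTrans.comp_app, NatTrans.id_app] at h2
        exact h2
      show (φ.hom.app f).app 0 ≫ ((φ.inv.app f).app 0 ≫ (S.obj f).map hom01)
          = (S.obj f).map hom01 ≫ 𝟙 _
      exact ((Category.assoc _ _ _).symm.trans ((congrArg (· ≫ (S.obj f).map hom01) hi).trans
        (Category.id_comp _))).trans (Category.comp_id _).symm
    · have e2 : (S'.obj f).map hom12 = (S.obj f).map hom12 ≫ (φ.hom.app f).app 1 := rfl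
      rw [e2]
      refine hB _ _ ?_ (hAB f).2
      refine Arrow.isoMk (Iso.refl _) (Iso.app (φ.app f) 1) ?_
      show 𝟙 _ ≫ ((S.obj f).map hom12 ≫ (φ.hom.app f).app 1)
          = (S.obj f).map hom12 ≫ (φ.hom.app f).app 1
      rw [Category.id_comp]

end ProPaper
end
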